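/- If V is an n-dimensional Chebyshev system of continuous functions on the circle S¹ = ℝ/2πℤ (i.e., every nonzero element of V has at most n−1 zeros counted with multiplicity), and h is a continuous function on S¹ that is L²-orthogonal to every element of V, then h has at least n+1 sign changes. -/

import Mathlib

open Real MeasureTheory

noncomputable section

private lemma neg_one_pow_cases (k : ℕ) : ((-1:ℝ))^k = 1 ∨ ((-1:ℝ))^k = -1 := by
  rcases Nat.even_or_odd k with hk | hk
  · exact Or.inl (Even.neg_one_pow hk)
  · exact Or.inr (Odd.neg_one_pow hk)

private lemma neg_one_pow_sq (k : ℕ) : ((-1:ℝ))^k * ((-1:ℝ))^k = 1 := by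
  rcases neg_one_pow_cases k with hk | hk <;> rw [hk] <;> norm_num

private lemma sign_const_of_preconnected {X : Type*} [TopologicalSpace X] {s : Set X}
    (hs : IsPreconnected s) {f : X → ℝ} (hf : ContinuousOn f s)
    (h0 : ∀ x ∈ s, f x ≠ 0) {x y : X} (hx : x ∈ s) (hy : y ∈ s) : 0 < f x * f y := by
  rcases lt_or_gt_of_ne (h0 x hx) with hfx | hfx
  · rcases lt_or_gt_of_ne (h0 y hy) with hfy | hfy
    · exact mul_pos_of_neg_of_neg hfx hfy
    · obtain ⟨w, hw, hfw⟩ := hs.intermediate_value₂ hx hy hf continuousOn_const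
        (le_of_lt hfx) (le_of_lt hfy)
      exact absurd hfw (h0 w hw)
  · rcases lt_or_gt_of_ne (h0 y hy) with hfy | hfy
    · obtain ⟨w, hw, hfw⟩ := hs.intermediate_value₂ hy hx hf continuousOn_const
        (le_of_lt hfy) (le_of_lt hfx)
      exact absurd hfw (h0 w hw)
    · exact mul_pos hfx hfy

/-- alternating sign predicate for a list of sample points -/
def HAlt (h : ℝ → ℝ) : List ℝ → ℝ → Prop
  | [], _ => True
  | (x :: l), s => 0 < s * h x ∧ HAlt h l (-s)

lemma HAlt_nil (h : ℝ → ℝ) (s : ℝ) : HAlt h [] s := trivial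

lemma HAlt_cons {h : ℝ → ℝ} {x : ℝ} {l : List ℝ} {s : ℝ} :
    HAlt h (x :: l) s ↔ 0 < s * h x ∧ HAlt h l (-s) := Iff.rfl

lemma HAlt_append {h : ℝ → ℝ} {l₁ l₂ : List ℝ} {s : ℝ} :
    HAlt h (l₁ ++ l₂) s ↔ HAlt h l₁ s ∧ HAlt h l₂ ((-1)^l₁.length * s) := by
  induction l₁ generalizing s with
  | nil => simp [HAlt_nil, HAlt]
  | cons a l ih =>
      simp only [List.cons_append, HAlt_cons, ih, List.length_cons]
      constructor
      · rintro ⟨h1, h2, h3⟩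
        refine ⟨⟨h1, h2⟩, ?_⟩
        have : ((-1:ℝ))^(l.length + 1) * s = (-1)^l.length * (-s) := by ring
        rwa [this]
      · rintro ⟨⟨h1, h2⟩, h3⟩
        refine ⟨h1, h2, ?_⟩
        have : ((-1:ℝ))^l.length * (-s) = (-1)^(l.length + 1) * s := by ring
        rwa [this]

lemma HAlt_get {h : ℝ → ℝ} {l : List ℝ} {s : ℝ} (hl : HAlt h l s) :
    ∀ i : Fin l.length, 0 < s * (-1)^(i:ℕ) * h (l.get i) := by
  induction l generalizing s with
  | nil => exact fun i => absurd i.2 (by simp)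
  | cons a l ih =>
      rcases hl with ⟨h1, h2⟩
      intro i
      refine Fin.cases ?_ ?_ i
      · simpa using h1
      · intro j
        have := ih h2 j
        have e : -s * (-1:ℝ)^(j:ℕ) = s * (-1)^((j:ℕ)+1) := by ring
        rw [e] at this
        simpa using this

def GoodL (h : ℝ → ℝ) (l : List ℝ) (s : ℝ) : Prop :=
  List.Chain' (· < ·) l ∧ (∀ a ∈ l, a ∈ Set.Ico (0:ℝ) (2*π)) ∧ HAlt h l s

lemma GoodL_take {h : ℝ → ℝ} {l : List ℝ} {s : ℝ} (hg : GoodL h l s) (k : ℕ) :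
    GoodL h (l.take k) s := by
  obtain ⟨hc, hm, ha⟩ := hg
  refine ⟨hc.take k, fun a ha' => hm a (List.mem_of_mem_take ha'), ?_⟩
  have := (l.take_append_drop k) ▸ ha
  exact (HAlt_append.1 this).1

lemma GoodL_toFin {h : ℝ → ℝ} {l : List ℝ} {s : ℝ} (hg : GoodL h l s) {k : ℕ}
    (hk : l.length = k) :
    ∃ x : Fin k → ℝ, StrictMono x ∧ (∀ i, x i ∈ Set.Ico (0:ℝ) (2*π)) ∧
      ∀ i : Fin k, 0 < s * (-1)^(i:ℕ) * h (x i) := by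
  obtain ⟨hc, hm, ha⟩ := hg
  refine ⟨fun i => l.get (Fin.cast hk.symm i), ?_, ?_, ?_⟩
  · intro i j hij
    exact List.pairwise_iff_get.1 (List.isChain_iff_pairwise.1 hc) _ _ (by simpa using hij)
  · exact fun i => hm _ (List.get_mem l _)
  · intro i
    simpa using HAlt_get ha (Fin.cast hk.symm i)

lemma getLast?_take_succ {l : List ℝ} {i : ℕ} (hi : i < l.length) :
    (l.take (i+1)).getLast? = some (l.get ⟨i, hi⟩) := by
  rw [List.take_succ, List.getElem?_eq_getElem hi, Option.toList_some, List.getLast?_concat,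
    List.get_eq_getElem]

lemma head?_drop' {l : List ℝ} {i : ℕ} (hi : i < l.length) :
    (l.drop i).head? = some (l.get ⟨i, hi⟩) := by
  rw [List.head?_drop, List.getElem?_eq_getElem hi, List.get_eq_getElem]

/-- prepend a point to a good list -/
lemma GoodL_cons {h : ℝ → ℝ} {l : List ℝ} {s : ℝ} (hg : GoodL h l s) {w : ℝ}
    (hw : w ∈ Set.Ico (0:ℝ) (2*π)) (hlt : ∀ b ∈ l.head?, w < b) (hsign : 0 < (-s) * h w) :
    GoodL h (w :: l) (-s) := by
  obtain ⟨hc, hm, ha⟩ := hg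
  refine ⟨List.isChain_cons.2 ⟨hlt, hc⟩, ?_, ⟨hsign, by simpa using ha⟩⟩
  intro a haa
  rcases List.mem_cons.1 haa with rfl | hal
  · exact hw
  · exact hm a hal

/-- append a point to a good list -/
lemma GoodL_concat {h : ℝ → ℝ} {l : List ℝ} {s : ℝ} (hg : GoodL h l s) {w : ℝ}
    (hw : w ∈ Set.Ico (0:ℝ) (2*π)) (hlt : ∀ b ∈ l.getLast?, b < w)
    (hsign : 0 < ((-1)^l.length * s) * h w) :
    GoodL h (l ++ [w]) s := by
  obtain ⟨hc, hm, ha⟩ := hg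
  refine ⟨List.isChain_append.2 ⟨hc, List.isChain_singleton w, ?_⟩, ?_, ?_⟩
  · intro x hx y hy
    simp only [List.head?_cons, Option.mem_some_iff] at hy
    subst hy; exact hlt x hx
  · intro a haa
    rcases List.mem_append.1 haa with hal | hal
    · exact hm a hal
    · simp only [List.mem_singleton] at hal; subst hal; exact hw
  · exact HAlt_append.2 ⟨ha, ⟨hsign, trivial⟩⟩

/-- insert two points after position `i` in a good list -/
lemma GoodL_insert_two {h : ℝ → ℝ} {l : List ℝ} {s : ℝ} (hg : GoodL h l s) {i : ℕ}
    (hi : i + 1 < l.length) {w r : ℝ}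
    (h1 : l.get ⟨i, by omega⟩ < w) (h2 : w < r) (h3 : r < l.get ⟨i+1, hi⟩)
    (hwm : w ∈ Set.Ico (0:ℝ) (2*π)) (hrm : r ∈ Set.Ico (0:ℝ) (2*π))
    (hsw : 0 < ((-1)^(i+1) * s) * h w) (hsr : 0 < ((-1)^(i+2) * s) * h r) :
    ∃ l' : List ℝ, GoodL h l' s ∧ l'.length = l.length + 2 := by
  have hi' : i < l.length := by omega
  refine ⟨l.take (i+1) ++ ([w, r] ++ l.drop (i+1)), ?_, ?_⟩
  · obtain ⟨hc, hm, ha⟩ := hg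
    have hlen1 : (l.take (i+1)).length = i + 1 := by
      rw [List.length_take]; omega
    refine ⟨?_, ?_, ?_⟩
    · refine List.isChain_append.2 ⟨hc.take _, ?_, ?_⟩
      · refine List.isChain_append.2 ⟨?_, hc.drop _, ?_⟩
        · exact List.isChain_pair.2 h2
        · intro x hx y hy
          simp only [List.getLast?_cons_cons, List.getLast?_singleton,
            Option.mem_some_iff] at hx
          subst hx
          rw [head?_drop' hi, Option.mem_some_iff] at hy
          subst hy; exact h3
      · intro x hx y hy
        rw [getLast?_take_succ hi', Option.mem_some_iff] at hx
        subst hx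
        simp only [List.cons_append, List.head?_cons, Option.mem_some_iff] at hy
        subst hy; exact h1
    · intro a haa
      rcases List.mem_append.1 haa with hal | hal
      · exact hm a (List.mem_of_mem_take hal)
      · have : a = w ∨ a = r ∨ a ∈ l.drop (i+1) := by simpa using hal
        rcases this with rfl | rfl | hal
        · exact hwm
        · exact hrm
        · exact hm a (List.mem_of_mem_drop hal)
    · rw [HAlt_append, hlen1]
      constructor
      · have := (l.take_append_drop (i+1)) ▸ ha
        exact (HAlt_append.1 this).1
      · rw [HAlt_append]
        refine ⟨⟨by simpa using hsw, ?_, trivial⟩, ?_⟩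
        · have : -((-1:ℝ)^(i+1) * s) = (-1)^(i+2) * s := by ring
          rw [this]; exact hsr
        · have := (l.take_append_drop (i+1)) ▸ ha
          have h5 := (HAlt_append.1 this).2
          rw [hlen1] at h5
          have e : ((-1:ℝ))^(List.length [w,r]) * ((-1)^(i+1)*s) = (-1)^(i+1)*s := by
            norm_num
          rw [e]; exact h5
  · have hlen1 : (l.take (i+1)).length = i + 1 := by
      rw [List.length_take]; omega
    rw [List.length_append, List.length_append, hlen1, List.length_cons, List.length_cons,
      List.length_nil, List.length_drop]
    omega

/-- evaluation matrix -/
def MatE {m : ℕ} (bas : Fin m → ℝ → ℝ) (p : Fin m → ℝ) : Matrix (Fin m) (Fin m) ℝ :=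
  Matrix.of fun i j => bas j (p i)

/-- number of nodes strictly below `x` -/
def Kcnt {ν : ℕ} (t : Fin ν → ℝ) (x : ℝ) : ℕ :=
  (Finset.univ.filter fun i => t i < x).card

/-- the basic alternating function: determinant with last row free -/
def Ffun {ν : ℕ} (bas : Fin (ν+1) → ℝ → ℝ) (t : Fin ν → ℝ) (x : ℝ) : ℝ :=
  (MatE bas (Fin.snoc t x)).det

variable {ν : ℕ} {bas : Fin (ν+1) → ℝ → ℝ}

lemma matE_det_cont {α : Type*} [TopologicalSpace α] (hbasc : ∀ j, Continuous (bas j))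
    {q : α → Fin (ν+1) → ℝ} (hq : ∀ i, Continuous fun a => q a i) :
    Continuous fun a => (MatE bas (q a)).det := by
  apply Continuous.matrix_det
  apply continuous_matrix
  intro i j
  exact (hbasc j).comp (hq i)

lemma Ffun_cont (hbasc : ∀ j, Continuous (bas j)) (t : Fin ν → ℝ) :
    Continuous (Ffun bas t) := by
  apply matE_det_cont hbasc
  intro i
  refine Fin.lastCases ?_ ?_ i
  · simpa [Fin.snoc_last] using continuous_id'
  · intro i'
    simpa [Fin.snoc_castSucc] using continuous_const

lemma Ffun_node (t : Fin ν → ℝ) (i : Fin ν) : Ffun bas t (t i) = 0 := by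
  apply Matrix.det_zero_of_row_eq (i := i.castSucc) (j := Fin.last ν)
  · exact Fin.ne_of_lt (Fin.castSucc_lt_last i)
  · funext j
    simp [MatE, Fin.snoc_castSucc, Fin.snoc_last]

/-- representation of Ffun in terms of the basis functions -/
lemma Ffun_repr (t : Fin ν → ℝ) :
    ∃ c : Fin (ν+1) → ℝ, ∀ x, Ffun bas t x = ∑ j, c j * bas j x := by
  refine ⟨fun j => (-1)^(ν + (j:ℕ)) *
    (Matrix.of fun i' j' => bas (j.succAbove j') (t i') : Matrix (Fin ν) (Fin ν) ℝ).det, ?_⟩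
  intro x
  rw [Ffun, Matrix.det_succ_row _ (Fin.last ν)]
  refine Finset.sum_congr rfl ?_
  intro j _
  have h1 : (MatE bas (Fin.snoc t x)) (Fin.last ν) j = bas j x := by
    simp [MatE, Fin.snoc_last]
  have h2 : (MatE bas (Fin.snoc t x)).submatrix (Fin.last ν).succAbove j.succAbove
      = (Matrix.of fun i' j' => bas (j.succAbove j') (t i') : Matrix (Fin ν) (Fin ν) ℝ) := by
    ext i' j'
    simp [MatE, Matrix.submatrix, Fin.succAbove_last, Fin.snoc_castSucc]
  rw [h1, h2]
  have h3 : ((Fin.last ν : Fin (ν+1)) : ℕ) = ν := rfl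
  rw [h3]
  ring


variable {ν : ℕ} {bas : Fin (ν+1) → ℝ → ℝ}

/-- snoc with an updated slot, swapped -/
lemma snoc_update_swap (t : Fin ν → ℝ) (J : Fin ν) (a b : ℝ) :
    Fin.snoc (Function.update t J b) a =
      (Fin.snoc (Function.update t J a) b : Fin (ν+1) → ℝ) ∘
        (Equiv.swap (J.castSucc) (Fin.last ν)) := by
  funext i
  simp only [Function.comp_apply]
  refine Fin.lastCases ?_ ?_ i
  · rw [Fin.snoc_last, Equiv.swap_apply_right, Fin.snoc_castSucc, Function.update_self]
  · intro i'
    by_cases hi : i' = J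
    · subst hi
      rw [Fin.snoc_castSucc, Function.update_self, Equiv.swap_apply_left, Fin.snoc_last]
    · have hne1 : i'.castSucc ≠ J.castSucc := by
        simpa [Fin.castSucc_inj] using hi
      have hne2 : i'.castSucc ≠ Fin.last ν := Fin.ne_of_lt (Fin.castSucc_lt_last i')
      rw [Fin.snoc_castSucc, Function.update_of_ne hi,
        Equiv.swap_apply_of_ne_of_ne hne1 hne2, Fin.snoc_castSucc, Function.update_of_ne hi]

lemma det_swap_eq (p : Fin (ν+1) → ℝ) (a b : Fin (ν+1)) (hab : a ≠ b) :
    (MatE bas (p ∘ Equiv.swap a b)).det = -(MatE bas p).det := by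
  have h1 : MatE bas (p ∘ Equiv.swap a b) = (MatE bas p).submatrix (Equiv.swap a b) id := by
    ext i j
    simp [MatE, Matrix.submatrix]
  rw [h1, Matrix.det_permute]
  rw [Equiv.Perm.sign_swap hab]
  norm_num




lemma Ffun_swap (hbasc : ∀ j, Continuous (bas j))
    (hD : ∀ p : Fin (ν+1) → ℝ, (∀ i, p i ∈ Set.Ico (0:ℝ) (2*π)) → Function.Injective p →
      (MatE bas p).det ≠ 0)
    {t : Fin ν → ℝ} (ht : StrictMono t) (htm : ∀ i, t i ∈ Set.Ico (0:ℝ) (2*π))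
    {J : Fin ν} {u v : ℝ} (hu : u ∈ Set.Ico (0:ℝ) (2*π)) (hv : v ∈ Set.Ico (0:ℝ) (2*π))
    (h1 : u < t J) (h2 : t J < v) (hother : ∀ i, i ≠ J → t i ∉ Set.Icc u v) :
    Ffun bas t u * Ffun bas t v < 0 := by
  set H : ℝ × ℝ → ℝ := fun ab => (MatE bas (Fin.snoc (Function.update t J ab.1) ab.2)).det
    with hHdef
  have hFu : Ffun bas t u = H (t J, u) := by
    simp only [hHdef, Ffun, Function.update_eq_self]
  have hFv : Ffun bas t v = H (t J, v) := by
    simp only [hHdef, Ffun, Function.update_eq_self]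
  -- antisymmetry
  have hanti : ∀ a b : ℝ, H (b, a) = -H (a, b) := by
    intro a b
    have := snoc_update_swap t J a b
    simp only [hHdef]
    rw [this, det_swap_eq _ _ _ (Fin.ne_of_lt (Fin.castSucc_lt_last J))]
  -- the region
  set R : Set (ℝ × ℝ) := {ab | u ≤ ab.1 ∧ ab.1 < ab.2 ∧ ab.2 ≤ v} with hRdef
  have hconv : Convex ℝ R := by
    intro p hp q hq a b ha hb hab
    simp only [hRdef, Set.mem_setOf_eq, Prod.fst_add, Prod.snd_add, Prod.smul_fst,
      Prod.smul_snd, smul_eq_mul] at *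
    obtain ⟨hp1, hp2, hp3⟩ := hp
    obtain ⟨hq1, hq2, hq3⟩ := hq
    have eu : a*u + b*u = u := by rw [← add_mul, hab, one_mul]
    have ev : a*v + b*v = v := by rw [← add_mul, hab, one_mul]
    refine ⟨by linarith [mul_le_mul_of_nonneg_left hp1 ha, mul_le_mul_of_nonneg_left hq1 hb],
      ?_, by linarith [mul_le_mul_of_nonneg_left hp3 ha, mul_le_mul_of_nonneg_left hq3 hb]⟩
    rcases eq_or_lt_of_le ha with ha0 | ha0
    · have hb1 : b = 1 := by linarith
      simp [← ha0, hb1]; linarith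
    · nlinarith [mul_lt_mul_of_pos_left hp2 ha0,
        mul_le_mul_of_nonneg_left (le_of_lt hq2) hb]
  have hHcont : Continuous H := by
    apply matE_det_cont hbasc
    intro i
    refine Fin.lastCases ?_ ?_ i
    · simpa [Fin.snoc_last] using continuous_snd
    · intro i'
      by_cases hi : i' = J
      · subst hi
        simpa [Fin.snoc_castSucc, Function.update_self] using continuous_fst
      · simpa [Fin.snoc_castSucc, Function.update_of_ne hi] using continuous_const
  have hne : ∀ ab ∈ R, H ab ≠ 0 := by
    rintro ⟨a, b⟩ ⟨hab1, hab2, hab3⟩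
    apply hD
    · intro i
      refine Fin.lastCases ?_ ?_ i
      · rw [Fin.snoc_last]
        exact ⟨le_trans hu.1 (le_trans hab1 (le_of_lt hab2)), lt_of_le_of_lt hab3 hv.2⟩
      · intro i'
        rw [Fin.snoc_castSucc]
        by_cases hi : i' = J
        · subst hi
          rw [Function.update_self]
          exact ⟨le_trans hu.1 hab1, lt_of_lt_of_le hab2 (le_trans hab3 (le_of_lt hv.2))⟩
        · rw [Function.update_of_ne hi]; exact htm i'
    · -- injectivity
      intro i j hij
      by_contra hne'
      have key : ∀ (i' : Fin ν) (c : ℝ), c ∈ Set.Icc u v →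
          Function.update t J a i' = c → i' = J := by
        intro i' c hc hc'
        by_contra hi'
        rw [Function.update_of_ne hi'] at hc'
        exact hother i' hi' (hc' ▸ hc)
      have hamem : a ∈ Set.Icc u v := ⟨hab1, le_trans (le_of_lt hab2) hab3⟩
      have hbmem : b ∈ Set.Icc u v := ⟨le_trans hab1 (le_of_lt hab2), hab3⟩
      rcases Fin.eq_castSucc_or_eq_last i with ⟨i₁, rfl⟩ | rfl <;>
        rcases Fin.eq_castSucc_or_eq_last j with ⟨j₁, rfl⟩ | rfl
      · rw [Fin.snoc_castSucc, Fin.snoc_castSucc] at hij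
        have hi₁j₁ : i₁ ≠ j₁ := fun hcontra => hne' (by rw [hcontra])
        by_cases hi : i₁ = J
        · subst hi
          rw [Function.update_self, Function.update_of_ne (Ne.symm hi₁j₁)] at hij
          exact hother j₁ (Ne.symm hi₁j₁) (hij ▸ hamem)
        · by_cases hj' : j₁ = J
          · subst hj'
            rw [Function.update_self, Function.update_of_ne hi] at hij
            exact hother i₁ hi (hij ▸ hamem)
          · rw [Function.update_of_ne hi, Function.update_of_ne hj'] at hij
            exact hi₁j₁ (ht.injective hij)
      · rw [Fin.snoc_last, Fin.snoc_castSucc] at hij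
        have := key i₁ b hbmem hij
        subst this
        rw [Function.update_self] at hij
        exact absurd hij (ne_of_lt hab2)
      · rw [Fin.snoc_last, Fin.snoc_castSucc] at hij
        have := key j₁ b hbmem hij.symm
        subst this
        rw [Function.update_self] at hij
        exact absurd hij.symm (ne_of_lt hab2)
      · exact hne' rfl
  have hpos : 0 < H (u, t J) * H (t J, v) := by
    have h1m : (u, t J) ∈ R := ⟨le_refl u, h1, le_of_lt h2⟩
    have h2m : (t J, v) ∈ R := ⟨le_of_lt h1, h2, le_refl v⟩
    exact sign_const_of_preconnected hconv.isPreconnected hHcont.continuousOn hne h1m h2m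
  have h3 : H (t J, u) = -H (u, t J) := hanti u (t J)
  rw [hFu, hFv, h3]
  nlinarith

lemma Ffun_ne_zero
    (hD : ∀ p : Fin (ν+1) → ℝ, (∀ i, p i ∈ Set.Ico (0:ℝ) (2*π)) → Function.Injective p →
      (MatE bas p).det ≠ 0)
    {t : Fin ν → ℝ} (ht : StrictMono t) (htm : ∀ i, t i ∈ Set.Ico (0:ℝ) (2*π))
    {x : ℝ} (hx : x ∈ Set.Ico (0:ℝ) (2*π)) (hnx : ∀ i, t i ≠ x) :
    Ffun bas t x ≠ 0 := by
  apply hD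
  · intro i
    rcases Fin.eq_castSucc_or_eq_last i with ⟨i₁, rfl⟩ | rfl
    · rw [Fin.snoc_castSucc]; exact htm i₁
    · rw [Fin.snoc_last]; exact hx
  · intro i j hij
    rcases Fin.eq_castSucc_or_eq_last i with ⟨i₁, rfl⟩ | rfl <;>
      rcases Fin.eq_castSucc_or_eq_last j with ⟨j₁, rfl⟩ | rfl
    · rw [Fin.snoc_castSucc, Fin.snoc_castSucc] at hij
      rw [ht.injective hij]
    · rw [Fin.snoc_castSucc, Fin.snoc_last] at hij
      exact absurd hij (hnx i₁)
    · rw [Fin.snoc_last, Fin.snoc_castSucc] at hij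
      exact absurd hij.symm (hnx j₁)
    · rfl

lemma Kcnt_mono (t : Fin ν → ℝ) {x x' : ℝ} (hxx : x ≤ x') : Kcnt t x ≤ Kcnt t x' := by
  apply Finset.card_le_card
  intro i hi
  simp only [Finset.mem_filter, Finset.mem_univ, true_and] at hi ⊢
  exact lt_of_lt_of_le hi hxx

/-- main alternation lemma : relative signs of the det function -/
lemma Ffun_alt_pair (hbasc : ∀ j, Continuous (bas j))
    (hD : ∀ p : Fin (ν+1) → ℝ, (∀ i, p i ∈ Set.Ico (0:ℝ) (2*π)) → Function.Injective p →
      (MatE bas p).det ≠ 0)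
    {t : Fin ν → ℝ} (ht : StrictMono t) (htm : ∀ i, t i ∈ Set.Ico (0:ℝ) (2*π)) :
    ∀ x x', x ∈ Set.Ico (0:ℝ) (2*π) → x' ∈ Set.Ico (0:ℝ) (2*π) →
      (∀ i, t i ≠ x) → (∀ i, t i ≠ x') →
      0 < ((-1)^(Kcnt t x) * Ffun bas t x) * ((-1)^(Kcnt t x') * Ffun bas t x') := by
  -- first the ordered version
  suffices haux : ∀ d : ℕ, ∀ x x', d = Kcnt t x' → x ≤ x' →
      x ∈ Set.Ico (0:ℝ) (2*π) → x' ∈ Set.Ico (0:ℝ) (2*π) →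
      (∀ i, t i ≠ x) → (∀ i, t i ≠ x') →
      0 < ((-1)^(Kcnt t x) * Ffun bas t x) * ((-1)^(Kcnt t x') * Ffun bas t x') by
    intro x x' hx hx' hnx hnx'
    rcases le_total x x' with hle | hle
    · exact haux _ x x' rfl hle hx hx' hnx hnx'
    · have := haux _ x' x rfl hle hx' hx hnx' hnx
      linarith [this, mul_comm ((-1:ℝ)^(Kcnt t x') * Ffun bas t x')
        ((-1)^(Kcnt t x) * Ffun bas t x)]
  intro d
  induction d using Nat.strong_induction_on with
  | _ d IH =>
    intro x x' hd hle hx hx' hnx hnx'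
    rcases Nat.eq_or_lt_of_le (Kcnt_mono t hle) with heq | hlt
    · -- same interval : no node in [x, x']
      have hsets : (Finset.univ.filter fun i => t i < x)
          = (Finset.univ.filter fun i => t i < x') := by
        apply Finset.eq_of_subset_of_card_le
        · intro i hi
          simp only [Finset.mem_filter, Finset.mem_univ, true_and] at hi ⊢
          exact lt_of_lt_of_le hi hle
        · exact le_of_eq heq.symm
      have hnonode : ∀ w ∈ Set.Icc x x', ∀ i, t i ≠ w := by
        rintro w ⟨hw1, hw2⟩ i rfl
        rcases lt_or_eq_of_le hw2 with hw2 | hw2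
        · have : i ∈ (Finset.univ.filter fun i => t i < x') := by
            simp [hw2]
          rw [← hsets] at this
          simp only [Finset.mem_filter, Finset.mem_univ, true_and] at this
          exact absurd this (not_lt.2 hw1)
        · exact hnx' i hw2
      have hFF : 0 < Ffun bas t x * Ffun bas t x' := by
        apply sign_const_of_preconnected isPreconnected_Icc
          ((Ffun_cont hbasc t).continuousOn)
        · intro w hw
          apply Ffun_ne_zero hD ht htm
          · exact ⟨le_trans hx.1 hw.1, lt_of_le_of_lt hw.2 hx'.2⟩
          · exact hnonode w hw
        · exact ⟨le_refl x, hle⟩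
        · exact ⟨hle, le_refl x'⟩
      rw [← heq]
      nlinarith [neg_one_pow_sq (Kcnt t x), hFF]
    · -- there is a node in between
      subst hd
      set T := (Finset.univ.filter fun i => t i < x') with hT
      have hTcard : T.card = Kcnt t x' := rfl
      have hTne : T.Nonempty := by
        rw [← Finset.card_pos, hTcard]
        omega
      set J := T.max' hTne with hJ
      have hJT : J ∈ T := T.max'_mem hTne
      have htJx' : t J < x' := by
        simpa [hT, Finset.mem_filter] using hJT
      -- a witness node ≥ x
      have hwit : ∃ i, i ∈ T ∧ x ≤ t i := by
        by_contra hcon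
        push_neg at hcon
        have hsub : T ⊆ (Finset.univ.filter fun i => t i < x) := by
          intro i hi
          simp only [Finset.mem_filter, Finset.mem_univ, true_and]
          exact hcon i hi
        have := Finset.card_le_card hsub
        have h2 : (Finset.univ.filter fun i => t i < x).card = Kcnt t x := rfl
        omega
      obtain ⟨iw, hiwT, hiwx⟩ := hwit
      have hxtJ : x < t J := by
        have : iw ≤ J := Finset.le_max' T iw hiwT
        have : t iw ≤ t J := ht.monotone this
        rcases lt_or_eq_of_le (le_trans hiwx this) with hh | hh
        · exact hh
        · exact absurd hh.symm (hnx J)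
      -- the point u just below t J
      set Pset := insert x ((Finset.univ.filter fun i => t i < t J).image t) with hPset
      have hPne : Pset.Nonempty := ⟨x, Finset.mem_insert_self _ _⟩
      set P := Pset.max' hPne with hP
      have hPlt : P < t J := by
        apply Finset.max'_lt_iff Pset hPne |>.2
        intro w hw
        rcases Finset.mem_insert.1 hw with rfl | hw
        · exact hxtJ
        · obtain ⟨i, hi, rfl⟩ := Finset.mem_image.1 hw
          simpa [Finset.mem_filter] using hi
      have hxP : x ≤ P := Finset.le_max' _ x (Finset.mem_insert_self _ _)
      set u := (P + t J)/2 with hu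
      have hPu : P < u := by rw [hu]; linarith
      have hutJ : u < t J := by rw [hu]; linarith
      have hxu : x ≤ u := le_trans hxP (le_of_lt hPu)
      have hum : u ∈ Set.Ico (0:ℝ) (2*π) := ⟨le_trans hx.1 hxu, lt_trans hutJ (htm J).2⟩
      have hnu : ∀ i, t i ≠ u := by
        intro i hi
        rcases lt_trichotomy (t i) (t J) with hh | hh | hh
        · have : t i ∈ Pset := Finset.mem_insert_of_mem
            (Finset.mem_image_of_mem t (by simp [hh]))
          have := Finset.le_max' _ _ this
          rw [← hP] at this
          linarith [hi ▸ this]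
        · rw [hh] at hi; linarith [hi]
        · linarith [hi ▸ hh]
      -- counting : Kcnt t u = Kcnt t x' - 1
      have hfilter_u : (Finset.univ.filter fun i => t i < u) = T.erase J := by
        ext i
        simp only [Finset.mem_filter, Finset.mem_univ, true_and, Finset.mem_erase, hT]
        constructor
        · intro hi
          constructor
          · intro hiJ; subst hiJ; linarith
          · exact lt_trans (lt_trans hi hutJ) htJx'
        · rintro ⟨hiJ, hi⟩
          have hiltJ : i < J := lt_of_le_of_ne (Finset.le_max' T i (by simp [hT, hi])) hiJ
          have : t i < t J := ht hiltJ
          have : t i ∈ Pset := Finset.mem_insert_of_mem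
            (Finset.mem_image_of_mem t (by simp [this]))
          have := Finset.le_max' _ _ this
          rw [← hP] at this
          linarith
      have hKu : Kcnt t u + 1 = Kcnt t x' := by
        rw [Kcnt, hfilter_u, Finset.card_erase_of_mem hJT, Kcnt, ← hT]
        have : 1 ≤ T.card := Finset.card_pos.2 hTne
        omega
      -- swap across t J
      have hswap : Ffun bas t u * Ffun bas t x' < 0 := by
        apply Ffun_swap hbasc hD ht htm hum hx' hutJ htJx'
        intro i hiJ ⟨hw1, hw2⟩
        rcases lt_or_eq_of_le hw2 with hw2 | hw2
        · have hiT : i ∈ T := by simp [hT, hw2]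
          have hiltJ : i < J := lt_of_le_of_ne (Finset.le_max' T i hiT) hiJ
          have : t i < t J := ht hiltJ
          have : t i ∈ Pset := Finset.mem_insert_of_mem
            (Finset.mem_image_of_mem t (by simp [this]))
          have := Finset.le_max' _ _ this
          rw [← hP] at this
          linarith
        · exact hnx' i hw2
      -- induction hypothesis applied to (x, u)
      have hIH := IH (Kcnt t u) (by omega) x u rfl hxu hx hum hnx hnu
      -- combine the signs
      have hFune : Ffun bas t u ≠ 0 := by
        intro h0
        rw [h0] at hIH
        simp at hIH
      have hFu2 : 0 < Ffun bas t u * Ffun bas t u := mul_self_pos.2 hFune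
      rw [← hKu, pow_succ]
      nlinarith [hIH, hswap, hFu2, neg_one_pow_sq (Kcnt t u), neg_one_pow_sq (Kcnt t x)]

lemma exists_offnode {ν : ℕ} (t : Fin ν → ℝ) :
    ∃ x, x ∈ Set.Ioo (0:ℝ) (2*π) ∧ ∀ i, t i ≠ x := by
  have hinf : (Set.Ioo (0:ℝ) (2*π)).Infinite := Set.Ioo_infinite (by positivity)
  have : ((Set.Ioo (0:ℝ) (2*π)) \ Set.range t).Infinite :=
    hinf.diff (Set.finite_range t)
  obtain ⟨x, hx⟩ := this.nonempty
  exact ⟨x, hx.1, fun i hi => hx.2 ⟨i, hi⟩⟩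

lemma Ffun_pattern {ν : ℕ} {bas : Fin (ν+1) → ℝ → ℝ} (hbasc : ∀ j, Continuous (bas j))
    (hD : ∀ p : Fin (ν+1) → ℝ, (∀ i, p i ∈ Set.Ico (0:ℝ) (2*π)) → Function.Injective p →
      (MatE bas p).det ≠ 0)
    {t : Fin ν → ℝ} (ht : StrictMono t) (htm : ∀ i, t i ∈ Set.Ico (0:ℝ) (2*π)) :
    ∃ τ : ℝ, (τ = 1 ∨ τ = -1) ∧ ∀ x, x ∈ Set.Ico (0:ℝ) (2*π) → (∀ i, t i ≠ x) →
      0 < τ * ((-1)^(Kcnt t x) * Ffun bas t x) := by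
  obtain ⟨x₀, hx₀, hnx₀⟩ := exists_offnode t
  have hx₀' : x₀ ∈ Set.Ico (0:ℝ) (2*π) := ⟨le_of_lt hx₀.1, hx₀.2⟩
  set P₀ := (-1:ℝ)^(Kcnt t x₀) * Ffun bas t x₀ with hP₀
  by_cases hpos : 0 < P₀
  · refine ⟨1, Or.inl rfl, ?_⟩
    intro x hx hnx
    have hp := Ffun_alt_pair hbasc hD ht htm x x₀ hx hx₀' hnx hnx₀
    rw [← hP₀] at hp
    rcases lt_trichotomy ((-1:ℝ)^(Kcnt t x) * Ffun bas t x) 0 with hc | hc | hc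
    · nlinarith
    · rw [hc] at hp; simp at hp
    · linarith
  · refine ⟨-1, Or.inr rfl, ?_⟩
    intro x hx hnx
    have hp := Ffun_alt_pair hbasc hD ht htm x x₀ hx hx₀' hnx hnx₀
    rw [← hP₀] at hp
    have hP₀ne : P₀ ≠ 0 := by intro hc; rw [hc] at hp; simp at hp
    have hP₀neg : P₀ < 0 := lt_of_le_of_ne (not_lt.1 hpos) hP₀ne
    rcases lt_trichotomy ((-1:ℝ)^(Kcnt t x) * Ffun bas t x) 0 with hc | hc | hc
    · linarith
    · rw [hc] at hp; simp at hp
    · nlinarith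

lemma Kcnt_eq_of_agree {ν c : ℕ} (hc : c ≤ ν) {t : Fin ν → ℝ} {z : Fin c → ℝ}
    (hagree : ∀ (i : Fin ν) (hic : (i:ℕ) < c), t i = z ⟨i, hic⟩) {x : ℝ}
    (hhigh : ∀ i : Fin ν, c ≤ (i:ℕ) → x ≤ t i) :
    Kcnt t x = Kcnt z x := by
  unfold Kcnt
  rw [show (Finset.univ.filter fun i : Fin ν => t i < x)
      = (Finset.univ.filter fun i : Fin c => z i < x).map (Fin.castLEEmb hc) from ?_,
    Finset.card_map]
  ext i
  simp only [Finset.mem_filter, Finset.mem_univ, true_and, Finset.mem_map]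
  constructor
  · intro hi
    have hic : (i:ℕ) < c := by
      by_contra hcon
      exact absurd hi (not_lt.2 (hhigh i (not_lt.1 hcon)))
    refine ⟨⟨i, hic⟩, ?_, ?_⟩
    · rw [← hagree i hic]; exact hi
    · exact Fin.ext rfl
  · rintro ⟨j, hj, rfl⟩
    have he : t (Fin.castLEEmb hc j) = z j := by
      have := hagree (Fin.castLEEmb hc j) (by simpa using j.2)
      rw [this]
      rfl
    rw [he]; exact hj
lemma card_filter_val_lt (c K : ℕ) (hK : K ≤ c) :
    (Finset.univ.filter fun j : Fin c => (j:ℕ) < K).card = K := by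
  rw [show (Finset.univ.filter fun j : Fin c => (j:ℕ) < K)
      = (Finset.univ : Finset (Fin K)).map (Fin.castLEEmb hK) from ?_]
  · rw [Finset.card_map, Finset.card_univ, Fintype.card_fin]
  · ext j
    simp only [Finset.mem_filter, Finset.mem_univ, true_and, Finset.mem_map]
    constructor
    · intro hj
      exact ⟨⟨j, hj⟩, Fin.ext rfl⟩
    · rintro ⟨a, _, rfl⟩
      simpa using a.2

lemma stepA {h : ℝ → ℝ} (hh : Continuous h) {c : ℕ} {s : ℝ} (hs : s = 1 ∨ s = -1)
    {l : List ℝ} (hg : GoodL h l s) (hlen : l.length = c + 1)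
    (hnot1 : ∀ (s' : ℝ) (l' : List ℝ), (s' = 1 ∨ s' = -1) → GoodL h l' s' →
      l'.length ≠ c + 2)
    (hnot2 : ∀ (s' : ℝ) (l' : List ℝ), (s' = 1 ∨ s' = -1) → GoodL h l' s' →
      l'.length ≠ c + 3) :
    ∃ z : Fin c → ℝ, StrictMono z ∧ (∀ i, z i ∈ Set.Ico (0:ℝ) (2*π)) ∧
      (∀ i : Fin c, z i < l.get ⟨c, by omega⟩) ∧
      (∀ x, x ∈ Set.Ico (0:ℝ) (2*π) → 0 ≤ s * (-1)^(Kcnt z x) * h x) := by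
  have hsne : s ≠ 0 := by rcases hs with rfl | rfl <;> norm_num
  set y : Fin (c+1) → ℝ := fun i => l.get (Fin.cast hlen.symm i) with hy
  have hymono : ∀ a b : Fin (c+1), (a:ℕ) < (b:ℕ) → y a < y b := by
    intro a b hab
    exact List.pairwise_iff_get.1 (List.isChain_iff_pairwise.1 hg.1) _ _ (by simpa using hab)
  have hymem : ∀ i, y i ∈ Set.Ico (0:ℝ) (2*π) := fun i => hg.2.1 _ (List.get_mem l _)
  have hysign : ∀ i : Fin (c+1), 0 < s * (-1)^(i:ℕ) * h (y i) := by
    intro i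
    simpa [hy] using HAlt_get hg.2.2 (Fin.cast hlen.symm i)
  -- the sets whose suprema are the cut points
  set SS : Fin c → Set ℝ := fun i =>
    {w | w ∈ Set.Icc (y i.castSucc) (y i.succ) ∧ 0 < s * (-1)^(i:ℕ) * h w} with hSS
  have hcs : ∀ i : Fin c, ((i.castSucc : Fin (c+1)) : ℕ) = (i:ℕ) := fun i => rfl
  have hsucc : ∀ i : Fin c, ((i.succ : Fin (c+1)) : ℕ) = (i:ℕ)+1 := fun i => rfl
  have hylt : ∀ i : Fin c, y i.castSucc < y i.succ := by
    intro i; exact hymono _ _ (by rw [hcs, hsucc]; omega)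
  have hSmem : ∀ i : Fin c, y i.castSucc ∈ SS i := by
    intro i
    refine ⟨⟨le_refl _, le_of_lt (hylt i)⟩, ?_⟩
    have := hysign i.castSucc
    rwa [hcs] at this
  have hSne : ∀ i, (SS i).Nonempty := fun i => ⟨_, hSmem i⟩
  have hSbdd : ∀ i, BddAbove (SS i) := by
    intro i
    exact BddAbove.mono (fun w hw => hw.1) (bddAbove_Icc)
  set z : Fin c → ℝ := fun i => sSup (SS i) with hz
  have hzge : ∀ i, y i.castSucc ≤ z i := fun i => le_csSup (hSbdd i) (hSmem i)
  have hzle : ∀ i, z i ≤ y i.succ := fun i => csSup_le (hSne i) (fun w hw => hw.1.2)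
  -- sign of h at the cut point
  have hzsign : ∀ i : Fin c, 0 ≤ s * (-1)^(i:ℕ) * h (z i) := by
    intro i
    by_contra hcon
    push_neg at hcon
    have hev : ∀ᶠ w in nhds (z i), s * (-1)^(i:ℕ) * h w < 0 := by
      have hcont : Continuous fun w => s * (-1)^(i:ℕ) * h w := continuous_const.mul hh
      exact hcont.continuousAt.eventually_lt_const hcon
    obtain ⟨δ, hδ, hball⟩ := Metric.eventually_nhds_iff.1 hev
    obtain ⟨w, hwS, hwgt⟩ := exists_lt_of_lt_csSup (hSne i) (by linarith : z i - δ/2 < z i)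
    have hwle : w ≤ z i := le_csSup (hSbdd i) hwS
    have : s * (-1)^(i:ℕ) * h w < 0 := by
      apply hball
      rw [Real.dist_eq, abs_lt]
      constructor <;> linarith
    linarith [hwS.2]
  have hzlt : ∀ i : Fin c, z i < y i.succ := by
    intro i
    rcases lt_or_eq_of_le (hzle i) with hlt | heq
    · exact hlt
    · exfalso
      have h1 := hzsign i
      rw [heq] at h1
      have h2 := hysign i.succ
      rw [hsucc] at h2
      rw [pow_succ] at h2
      nlinarith
  have hzmono : StrictMono z := by
    intro a b hab
    calc z a < y a.succ := hzlt a
    _ ≤ y b.castSucc := by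
        rcases eq_or_lt_of_le (Nat.succ_le_of_lt (show (a:ℕ) < (b:ℕ) from hab)) with hh' | hh'
        · have : (a.succ : Fin (c+1)) = b.castSucc := by
            apply Fin.ext; rw [hsucc, hcs]; exact hh'
          rw [this]
        · exact le_of_lt (hymono _ _ (by rw [hsucc, hcs]; exact hh'))
    _ ≤ z b := hzge b
  have hzmem : ∀ i, z i ∈ Set.Ico (0:ℝ) (2*π) := by
    intro i
    constructor
    · exact le_trans (hymem i.castSucc).1 (hzge i)
    · exact lt_of_lt_of_le (hzlt i) (le_of_lt (hymem i.succ).2)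
  have hzlast : ∀ i : Fin c, z i < y (Fin.last c) := by
    intro i
    rcases eq_or_lt_of_le (show (i:ℕ)+1 ≤ c from by omega) with hh' | hh'
    · have : (i.succ : Fin (c+1)) = Fin.last c := by
        apply Fin.ext; rw [hsucc]; exact hh'
      rw [← this]; exact hzlt i
    · exact lt_trans (hzlt i) (hymono _ _ (by rw [hsucc]; simpa using hh'))
  -- interval sign claims
  have hI1 : ∀ x, 0 ≤ x → x ≤ y 0 → 0 ≤ s * h x := by
    intro x hx0 hxy
    by_contra hcon
    push_neg at hcon
    have hxy0 : x ≠ y 0 := by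
      intro hcc
      have := hysign 0
      rw [← hcc] at this
      simp at this
      nlinarith
    have hxlt : x < y 0 := lt_of_le_of_ne hxy hxy0
    have hxm : x ∈ Set.Ico (0:ℝ) (2*π) := ⟨hx0, lt_trans hxlt (hymem 0).2⟩
    have hcons := GoodL_cons hg hxm ?_ (by nlinarith)
    · exact hnot1 (-s) _ (by rcases hs with rfl | rfl <;> norm_num) hcons
        (by rw [List.length_cons, hlen])
    · intro b hb
      have h0 : (0:ℕ) < l.length := by omega
      rw [show l = l.drop 0 from rfl, head?_drop' h0, Option.mem_some_iff] at hb
      subst hb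
      exact hxlt
  have hI2 : ∀ x, x ∈ Set.Ico (0:ℝ) (2*π) → y (Fin.last c) ≤ x →
      0 ≤ s * (-1)^c * h x := by
    intro x hxm hxy
    by_contra hcon
    push_neg at hcon
    have hxy0 : x ≠ y (Fin.last c) := by
      intro hcc
      have := hysign (Fin.last c)
      rw [← hcc] at this
      simp only [Fin.val_last] at this
      nlinarith
    have hxgt : y (Fin.last c) < x := lt_of_le_of_ne hxy (Ne.symm hxy0)
    have hconc := GoodL_concat hg hxm ?_ ?_
    · exact hnot1 s _ hs hconc (by rw [List.length_append, hlen]; simp)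
    · intro b hb
      have hcl : c < l.length := by omega
      have : l.take (c+1) = l := by
        apply List.take_of_length_le; omega
      rw [← this, getLast?_take_succ hcl, Option.mem_some_iff] at hb
      subst hb
      exact hxgt
    · rw [hlen]
      have : ((-1:ℝ))^(c+1) * s = -(s * (-1)^c) := by ring
      rw [this]
      nlinarith
  have hI3 : ∀ (i : Fin c) (x : ℝ), y i.castSucc ≤ x → x ≤ z i →
      0 ≤ s * (-1)^(i:ℕ) * h x := by
    intro i x hyx hxz
    by_contra hcon
    push_neg at hcon
    have hxycs : x ≠ y i.castSucc := by
      intro hcc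
      have := hysign i.castSucc
      rw [← hcc, hcs] at this
      nlinarith
    have hygt : y i.castSucc < x := lt_of_le_of_ne hyx (Ne.symm hxycs)
    have hev : ∀ᶠ w in nhds x, s * (-1)^(i:ℕ) * h w < 0 := by
      have hcont : Continuous fun w => s * (-1)^(i:ℕ) * h w := continuous_const.mul hh
      exact hcont.continuousAt.eventually_lt_const hcon
    obtain ⟨δ, hδ, hball⟩ := Metric.eventually_nhds_iff.1 hev
    obtain ⟨r, hrS, hrgt⟩ := exists_lt_of_lt_csSup (hSne i)
      (by linarith : x - δ/2 < z i)
    have hrx : x + δ/2 ≤ r := by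
      by_contra hcon2
      push_neg at hcon2
      have : s * (-1)^(i:ℕ) * h r < 0 := by
        apply hball
        rw [Real.dist_eq, abs_lt]
        constructor <;> linarith
      linarith [hrS.2]
    have hrgtx : x < r := by linarith
    have hrlt : r < y i.succ := by
      rcases lt_or_eq_of_le hrS.1.2 with hh' | hh'
      · exact hh'
      · exfalso
        have h2 := hysign i.succ
        rw [hsucc, pow_succ] at h2
        rw [hh'] at hrS
        nlinarith [hrS.2]
    have hxm : x ∈ Set.Ico (0:ℝ) (2*π) :=
      ⟨le_trans (hymem i.castSucc).1 (le_of_lt hygt),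
        lt_trans (lt_of_lt_of_le (lt_of_le_of_lt hxz (hzlt i)) (le_refl _)) (hymem i.succ).2⟩
    have hrm : r ∈ Set.Ico (0:ℝ) (2*π) :=
      ⟨le_trans hxm.1 (le_of_lt hrgtx), lt_trans hrlt (hymem i.succ).2⟩
    have hii : (i:ℕ) + 1 < l.length := by rw [hlen]; omega
    obtain ⟨l', hl', hlen'⟩ := GoodL_insert_two hg hii
      (show l.get ⟨(i:ℕ), by omega⟩ < x from hygt) hrgtx
      (show r < l.get ⟨(i:ℕ)+1, hii⟩ from hrlt) hxm hrm
      (by rw [show ((-1:ℝ))^((i:ℕ)+1) * s = -(s * (-1)^(i:ℕ)) from by ring]; nlinarith)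
      (by rw [show ((-1:ℝ))^((i:ℕ)+2) * s = s * (-1)^(i:ℕ) from by ring]; nlinarith [hrS.2])
    exact hnot2 s l' hs hl' (by rw [hlen', hlen])
  have hI4 : ∀ (i : Fin c) (x : ℝ), z i < x → x ≤ y i.succ →
      s * (-1)^(i:ℕ) * h x ≤ 0 := by
    intro i x hzx hxy
    by_contra hcon
    push_neg at hcon
    have : x ∈ SS i := ⟨⟨le_trans (hzge i) (le_of_lt hzx), hxy⟩, hcon⟩
    have := le_csSup (hSbdd i) this
    linarith
  refine ⟨z, hzmono, hzmem, ?_, ?_⟩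
  · intro i
    exact hzlast i
  · -- the global pattern
    intro x hxm
    by_cases hxy0 : x ≤ y 0
    · have hK : Kcnt z x = 0 := by
        rw [Kcnt, Finset.card_eq_zero, Finset.filter_eq_empty_iff]
        intro i _
        push_neg
        calc x ≤ y 0 := hxy0
        _ ≤ y i.castSucc := by
            rcases Nat.eq_zero_or_pos (i : ℕ) with hh' | hh'
            · rw [show (i.castSucc : Fin (c+1)) = 0 from Fin.ext (by rw [hcs]; exact hh')]
            · exact le_of_lt (hymono _ _ (by rw [hcs]; simpa using hh'))
        _ ≤ z i := hzge i
      rw [hK, pow_zero]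
      have := hI1 x hxm.1 hxy0
      nlinarith
    · push_neg at hxy0
      set T := Finset.univ.filter (fun i : Fin (c+1) => y i ≤ x) with hT
      have hTne : T.Nonempty := ⟨0, by simp [hT, le_of_lt hxy0]⟩
      set i₀ := T.max' hTne with hi₀
      have hi₀mem : y i₀ ≤ x := by
        have := T.max'_mem hTne
        simpa [hT] using this
      have hgt : ∀ i : Fin (c+1), (i₀:ℕ) < (i:ℕ) → x < y i := by
        intro i hii
        by_contra hcon2
        push_neg at hcon2
        have : i ∈ T := by simp [hT, hcon2]
        have := Finset.le_max' T i this
        rw [← hi₀] at this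
        omega
      by_cases hi₀last : (i₀ : ℕ) = c
      · -- x is at or above the last sample point
        have hyl : y (Fin.last c) ≤ x := by
          rw [show Fin.last c = i₀ from Fin.ext (by simp [hi₀last])]
          exact hi₀mem
        have hK : Kcnt z x = c := by
          rw [Kcnt, show (Finset.univ.filter fun i : Fin c => z i < x) = Finset.univ from ?_]
          · rw [Finset.card_univ, Fintype.card_fin]
          · rw [Finset.filter_eq_self]
            intro i _
            exact lt_of_lt_of_le (hzlast i) hyl
        rw [hK]
        exact hI2 x hxm hyl
      · have hi₀c : (i₀ : ℕ) < c := by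
          have := i₀.2
          omega
        obtain ⟨i₁, hi₁val⟩ : ∃ i₁ : Fin c, (i₁:ℕ) = (i₀:ℕ) := ⟨⟨(i₀:ℕ), hi₀c⟩, rfl⟩
        have hcseq : (i₁.castSucc : Fin (c+1)) = i₀ := Fin.ext (by rw [hcs, hi₁val])
        have hyx : y i₁.castSucc ≤ x := by rw [hcseq]; exact hi₀mem
        have hxsucc : x < y i₁.succ := hgt _ (by rw [hsucc, hi₁val]; omega)
        by_cases hxz : x ≤ z i₁
        · have hK : Kcnt z x = (i₀ : ℕ) := by
            rw [Kcnt, show (Finset.univ.filter fun j : Fin c => z j < x)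
                = (Finset.univ.filter fun j : Fin c => (j:ℕ) < (i₀:ℕ)) from ?_]
            · exact card_filter_val_lt c (i₀:ℕ) (by omega)
            · apply Finset.filter_congr
              intro j _
              constructor
              · intro hj
                by_contra hcon2
                push_neg at hcon2
                have : z i₁ ≤ z j := hzmono.monotone (by rw [Fin.le_def, hi₁val]; omega)
                linarith
              · intro hj
                calc z j < y j.succ := hzlt j
                _ ≤ y i₁.castSucc := by
                    rcases eq_or_lt_of_le (show (j:ℕ)+1 ≤ (i₀:ℕ) from by omega) with hh' | hh'
                    · rw [show (j.succ : Fin (c+1)) = i₁.castSucc from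
                        Fin.ext (by rw [hsucc, hcs, hi₁val]; exact hh')]
                    · exact le_of_lt (hymono _ _ (by rw [hsucc, hcs, hi₁val]; exact hh'))
                _ ≤ x := hyx
          rw [hK]
          have := hI3 i₁ x hyx hxz
          rwa [hi₁val] at this
        · push_neg at hxz
          have hK : Kcnt z x = (i₀ : ℕ) + 1 := by
            rw [Kcnt, show (Finset.univ.filter fun j : Fin c => z j < x)
                = (Finset.univ.filter fun j : Fin c => (j:ℕ) < (i₀:ℕ)+1) from ?_]
            · exact card_filter_val_lt c ((i₀:ℕ)+1) (by omega)
            · apply Finset.filter_congr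
              intro j _
              constructor
              · intro hj
                by_contra hcon2
                push_neg at hcon2
                have hj1 : (i₁:ℕ) < (j:ℕ) := by rw [hi₁val]; omega
                have : y i₁.succ ≤ y j.castSucc ∨ i₁.succ = j.castSucc := by
                  rcases eq_or_lt_of_le (show (i₁:ℕ)+1 ≤ (j:ℕ) from hj1) with hh' | hh'
                  · exact Or.inr (Fin.ext (by rw [hsucc, hcs]; exact hh'))
                  · exact Or.inl (le_of_lt (hymono _ _ (by rw [hsucc, hcs]; exact hh')))
                rcases this with hh' | hh'
                · have := hzge j
                  linarith [hxsucc]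
                · have := hzge j
                  rw [← hh'] at this
                  linarith [hxsucc]
              · intro hj
                have : z j ≤ z i₁ := hzmono.monotone (by rw [Fin.le_def, hi₁val]; omega)
                linarith
          rw [hK]
          have := hI4 i₁ x hxz (le_of_lt hxsucc)
          rw [hi₁val] at this
          have heq2 : s * (-1)^((i₀:ℕ)+1) * h x = -(s * (-1)^(i₀:ℕ) * h x) := by ring
          rw [heq2]
          have : s * (-1)^(i₀:ℕ) * h x ≤ 0 := this
          linarith

set_option maxHeartbeats 2000000 in
theorem sturm_hurwitz_kellogg (n : ℕ) (V : Submodule ℝ (ℝ → ℝ))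
    (hVfd : FiniteDimensional ℝ V) (hVdim : Module.finrank ℝ V = n)
    (hVcont : ∀ g ∈ V, Continuous g ∧ Function.Periodic g (2 * π))
    (hCheb : ∀ g ∈ V, g ≠ 0 →
      {x ∈ Set.Ico (0 : ℝ) (2 * π) | g x = 0}.Finite ∧
      {x ∈ Set.Ico (0 : ℝ) (2 * π) | g x = 0}.ncard ≤ n - 1)
    (h : ℝ → ℝ) (hh : Continuous h) (hper : Function.Periodic h (2 * π))
    (hne : ∃ x, h x ≠ 0)
    (horth : ∀ g ∈ V, ∫ x in (0 : ℝ)..(2 * π), h x * g x = 0) :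
    ∃ x : Fin (n + 1) → ℝ, StrictMono x ∧ (∀ i, x i ∈ Set.Ico (0 : ℝ) (2 * π)) ∧
      ∃ e : ℝ, (e = 1 ∨ e = -1) ∧
        ∀ i : Fin (n + 1), 0 < e * (-1) ^ (i : ℕ) * h (x i) := by
  classical
  have hπ : 0 < 2*π := by positivity
  -- a base point in [0, 2π) where h is nonzero
  obtain ⟨y₀, hy₀⟩ := hne
  set x₀ : ℝ := y₀ - (⌊y₀ / (2*π)⌋ : ℝ) * (2*π) with hx₀def
  have hx₀per : h x₀ = h y₀ := by
    have := hper.sub_int_mul_eq (x := y₀) (n := ⌊y₀ / (2*π)⌋)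
    simpa [hx₀def, mul_comm] using this
  have hx₀ne : h x₀ ≠ 0 := by rw [hx₀per]; exact hy₀
  have hfl : (⌊y₀ / (2*π)⌋ : ℝ) ≤ y₀ / (2*π) := Int.floor_le _
  have hfl2 : y₀ / (2*π) < (⌊y₀ / (2*π)⌋ : ℝ) + 1 := Int.lt_floor_add_one _
  have hx₀mem : x₀ ∈ Set.Ico (0:ℝ) (2*π) := by
    constructor
    · rw [hx₀def]
      have : (⌊y₀ / (2*π)⌋ : ℝ) * (2*π) ≤ (y₀/(2*π)) * (2*π) :=
        mul_le_mul_of_nonneg_right hfl (le_of_lt hπ)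
      rw [div_mul_cancel₀ _ (ne_of_gt hπ)] at this
      linarith
    · rw [hx₀def]
      have : (y₀/(2*π)) * (2*π) < ((⌊y₀ / (2*π)⌋ : ℝ) + 1) * (2*π) :=
        mul_lt_mul_of_pos_right hfl2 hπ
      rw [div_mul_cancel₀ _ (ne_of_gt hπ)] at this
      linarith
  rcases Nat.eq_zero_or_pos n with rfl | hn
  · -- the trivial case n = 0
    refine ⟨fun _ => x₀, ?_, fun _ => hx₀mem, ?_⟩
    · intro a b hab
      exact absurd (Fin.ext (by omega) : a = b) (ne_of_lt hab)
    · rcases lt_or_gt_of_ne hx₀ne with hlt | hgt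
      · refine ⟨-1, Or.inr rfl, fun i => ?_⟩
        have : (i:ℕ) = 0 := by omega
        rw [this]; simpa using hlt
      · refine ⟨1, Or.inl rfl, fun i => ?_⟩
        have : (i:ℕ) = 0 := by omega
        rw [this]; simpa using hgt
  -- the main case
  obtain ⟨ν, rfl⟩ : ∃ ν, n = ν + 1 := ⟨n-1, by omega⟩
  -- basis of V
  set B : Module.Basis (Fin (ν+1)) ℝ V := (Module.finBasis ℝ V).reindex (finCongr (by rw [hVdim]))
    with hB
  set bas : Fin (ν+1) → ℝ → ℝ := fun j => ((B j : V) : ℝ → ℝ) with hbasdef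
  have hbasm : ∀ j, bas j ∈ V := fun j => (B j).2
  have hbasc : ∀ j, Continuous (bas j) := fun j => (hVcont _ (hbasm j)).1
  have hli : LinearIndependent ℝ bas := by
    have := B.linearIndependent.map' V.subtype (Submodule.ker_subtype V)
    exact this
  have hli' : ∀ v : Fin (ν+1) → ℝ, (∑ j, v j • bas j) = 0 → v = 0 := by
    intro v hv
    funext j
    exact Fintype.linearIndependent_iff.1 hli v hv j
  set gfun : (Fin (ν+1) → ℝ) → (ℝ → ℝ) := fun v => ∑ j, v j • bas j with hgfun
  have hgfun_apply : ∀ v x, gfun v x = ∑ j, v j * bas j x := by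
    intro v x
    rw [hgfun]
    simp [Finset.sum_apply]
  have hgfun_mem : ∀ v, gfun v ∈ V := fun v =>
    Submodule.sum_mem _ (fun j _ => Submodule.smul_mem _ _ (hbasm j))
  -- the key non-degeneracy property
  have hD : ∀ p : Fin (ν+1) → ℝ, (∀ i, p i ∈ Set.Ico (0:ℝ) (2*π)) → Function.Injective p →
      (MatE bas p).det ≠ 0 := by
    intro p hp hinj hdet
    obtain ⟨v, hvne, hveq⟩ := Matrix.exists_mulVec_eq_zero_iff.2 hdet
    have hgne : gfun v ≠ 0 := fun hc => hvne (hli' v hc)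
    obtain ⟨hfin, hcard⟩ := hCheb (gfun v) (hgfun_mem v) hgne
    have hzero : ∀ i, gfun v (p i) = 0 := by
      intro i
      have h0 : (∑ j, MatE bas p i j * v j) = 0 := by
        simpa [Matrix.mulVec, dotProduct] using congrFun hveq i
      rw [hgfun_apply, ← h0]
      apply Finset.sum_congr rfl
      intro j _
      rw [MatE, Matrix.of_apply, mul_comm]
    have hsub : Set.range p ⊆ {x ∈ Set.Ico (0:ℝ) (2*π) | gfun v x = 0} := by
      rintro _ ⟨i, rfl⟩
      exact ⟨hp i, hzero i⟩
    have hle := le_trans (Set.ncard_le_ncard hsub hfin) hcard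
    have hr : (Set.range p).ncard = ν + 1 := by
      have h1 : Set.range p = ↑(Finset.univ.image p) := by
        ext w; simp
      rw [h1, Set.ncard_coe_finset, Finset.card_image_of_injective _ hinj,
        Finset.card_univ, Fintype.card_fin]
    omega
  -- suppose the conclusion fails
  by_contra hcon
  set P : ℕ → Prop := fun k => ∃ s : ℝ, (s = 1 ∨ s = -1) ∧
    ∃ l : List ℝ, GoodL h l s ∧ l.length = k with hP
  have hP1 : P 1 := by
    rcases lt_or_gt_of_ne hx₀ne with hlt | hgt
    · exact ⟨-1, Or.inr rfl, [x₀], ⟨List.isChain_singleton _,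
        by intro a ha; simp at ha; subst ha; exact hx₀mem,
        ⟨by nlinarith, trivial⟩⟩, rfl⟩
    · exact ⟨1, Or.inl rfl, [x₀], ⟨List.isChain_singleton _,
        by intro a ha; simp at ha; subst ha; exact hx₀mem,
        ⟨by nlinarith, trivial⟩⟩, rfl⟩
  have hPtop : ¬ P (ν+1+1) := by
    rintro ⟨s, hs, l, hg, hlen⟩
    obtain ⟨x, hmono, hmem, hsign⟩ := GoodL_toFin hg hlen
    exact hcon ⟨x, hmono, hmem, s, hs, hsign⟩
  have hPmono : ∀ k, P (k+1) → P k := by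
    rintro k ⟨s, hs, l, hg, hlen⟩
    refine ⟨s, hs, l.take k, GoodL_take hg k, ?_⟩
    rw [List.length_take, hlen]
    omega
  set m := Nat.findGreatest P (ν+1) with hm
  have hm1 : 1 ≤ m := Nat.le_findGreatest (by omega) hP1
  have hPm : P m := Nat.findGreatest_spec (m := 1) (by omega) hP1
  have hmle : m ≤ ν + 1 := Nat.findGreatest_le (ν+1)
  have hnotm1 : ¬ P (m+1) := by
    rcases eq_or_lt_of_le hmle with heq | hlt
    · rw [heq]; exact hPtop
    · exact Nat.findGreatest_is_greatest (n := ν+1) (by omega) (by omega)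
  have hnotm2 : ¬ P (m+2) := fun hp => hnotm1 (hPmono _ hp)
  set c := m - 1 with hc
  have hmc : m = c + 1 := by omega
  have hcν : c ≤ ν := by omega
  obtain ⟨s, hs, l, hg, hlen⟩ := hPm
  have hsne : s ≠ 0 := by rcases hs with rfl | rfl <;> norm_num
  have hlen' : l.length = c + 1 := by rw [hlen, hmc]
  obtain ⟨z, hzmono, hzmem, hzlast, hpat⟩ := stepA hh hs hg hlen'
    (by intro s' l' hs' hg' hlen''
        exact hnotm1 ⟨s', hs', l', hg', by rw [hlen'', hmc]⟩)
    (by intro s' l' hs' hg' hlen''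
        exact hnotm2 ⟨s', hs', l', hg', by rw [hlen'', hmc]⟩)
  set A : ℝ := l.get ⟨c, by omega⟩ with hA
  have hAmem : A ∈ Set.Ico (0:ℝ) (2*π) := hg.2.1 _ (List.get_mem l _)
  -- the node families
  set δ : ℕ → ℝ := fun k => (2*π - A)/((ν+1) * (k+1)) with hδ
  have hδpos : ∀ k, 0 < δ k := by
    intro k
    apply div_pos (by linarith [hAmem.2])
    positivity
  set t : ℕ → Fin ν → ℝ := fun k i =>
    if hic : (i:ℕ) < c then z ⟨i, hic⟩ else 2*π - ((ν:ℝ) - (i:ℕ)) * δ k with ht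
  have hextra : ∀ k (i : Fin ν), c ≤ (i:ℕ) → t k i = 2*π - ((ν:ℝ) - (i:ℕ)) * δ k := by
    intro k i hci
    rw [ht]
    simp only
    rw [dif_neg (by omega)]
  have hagree : ∀ k (i : Fin ν) (hic : (i:ℕ) < c), t k i = z ⟨i, hic⟩ := by
    intro k i hic
    rw [ht]
    simp only
    rw [dif_pos hic]
  have hνi : ∀ i : Fin ν, (1:ℝ) ≤ (ν:ℝ) - (i:ℕ) := by
    intro i
    have := i.2
    have : ((i:ℕ):ℝ) ≤ (ν:ℝ) - 1 := by
      have h1 : (i:ℕ) ≤ ν - 1 := by omega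
      have h2 : ((i:ℕ):ℝ) ≤ ((ν - 1:ℕ):ℝ) := by exact_mod_cast h1
      rw [Nat.cast_sub (by omega)] at h2
      simpa using h2
    linarith
  have hνb : ∀ i : Fin ν, ((ν:ℝ) - (i:ℕ)) ≤ (ν:ℝ) := by
    intro i
    have : (0:ℝ) ≤ ((i:ℕ):ℝ) := by positivity
    linarith
  have hexA : ∀ k (i : Fin ν), c ≤ (i:ℕ) → A < t k i := by
    intro k i hci
    rw [hextra k i hci]
    have h1 : ((ν:ℝ) - (i:ℕ)) * δ k ≤ (ν:ℝ) * δ k :=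
      mul_le_mul_of_nonneg_right (hνb i) (le_of_lt (hδpos k))
    have h2 : (ν:ℝ) * δ k < ((ν:ℝ)+1) * δ k := by
      have := hδpos k
      nlinarith
    have h3 : ((ν:ℝ)+1) * δ k ≤ 2*π - A := by
      simp only [hδ]
      rw [div_eq_mul_inv]
      have hk1 : (1:ℝ) ≤ (k:ℝ)+1 := by
        have : (0:ℝ) ≤ (k:ℝ) := by positivity
        linarith
      have hν1 : (0:ℝ) < (ν:ℝ)+1 := by positivity
      have e1 : ((ν:ℝ)+1) * ((2*π - A) * (((ν:ℝ)+1)*((k:ℝ)+1))⁻¹)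
          = (2*π - A) * (((k:ℝ)+1))⁻¹ := by
        field_simp
      calc ((ν:ℝ)+1) * ((2*π-A) * ((((ν:ℝ)+1)*((k:ℝ)+1)))⁻¹) = (2*π-A) * ((k:ℝ)+1)⁻¹ := e1
      _ ≤ (2*π - A) * 1 := by
          apply mul_le_mul_of_nonneg_left _ (by linarith [hAmem.2])
          rw [inv_le_one_iff₀]
          right; linarith
      _ = 2*π - A := by ring
    linarith
  have htmono : ∀ k, StrictMono (t k) := by
    intro k
    intro a b hab
    have hab' : (a:ℕ) < (b:ℕ) := hab
    by_cases hac : (a:ℕ) < c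
    · by_cases hbc : (b:ℕ) < c
      · rw [hagree k a hac, hagree k b hbc]
        exact hzmono (show (⟨(a:ℕ), hac⟩ : Fin c) < ⟨(b:ℕ), hbc⟩ from hab')
      · rw [hagree k a hac]
        calc z ⟨(a:ℕ), hac⟩ < A := hzlast _
        _ < t k b := hexA k b (by omega)
    · have hbc : ¬ ((b:ℕ) < c) := by omega
      rw [hextra k a (by omega), hextra k b (by omega)]
      have : ((ν:ℝ) - (b:ℕ)) < ((ν:ℝ) - (a:ℕ)) := by
        have : ((a:ℕ):ℝ) < ((b:ℕ):ℝ) := by exact_mod_cast hab'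
        linarith
      nlinarith [hδpos k]
  have htmem : ∀ k (i : Fin ν), t k i ∈ Set.Ico (0:ℝ) (2*π) := by
    intro k i
    by_cases hic : (i:ℕ) < c
    · rw [hagree k i hic]; exact hzmem _
    · rw [hextra k i (by omega)]
      constructor
      · have := hexA k i (by omega)
        rw [hextra k i (by omega)] at this
        linarith [hAmem.1]
      · nlinarith [hδpos k, hνi i]
  -- per-k data
  have hτ : ∀ k, ∃ τ : ℝ, (τ = 1 ∨ τ = -1) ∧ ∀ x, x ∈ Set.Ico (0:ℝ) (2*π) →
      (∀ i, t k i ≠ x) → 0 < τ * ((-1)^(Kcnt (t k) x) * Ffun bas (t k) x) :=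
    fun k => Ffun_pattern hbasc hD (htmono k) (htmem k)
  choose τ hτs hτpat using hτ
  choose cv hcv using fun k => Ffun_repr (bas := bas) (t k)
  have hFne : ∀ k, ∃ x, Ffun bas (t k) x ≠ 0 := by
    intro k
    obtain ⟨w, hw, hwn⟩ := exists_offnode (t k)
    refine ⟨w, ?_⟩
    have := hτpat k w ⟨le_of_lt hw.1, hw.2⟩ hwn
    intro hzero
    rw [hzero] at this
    simp at this
  have hcvne : ∀ k, cv k ≠ 0 := by
    intro k hzero
    obtain ⟨x, hx⟩ := hFne k
    apply hx
    rw [hcv k x, hzero]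
    simp
  set u : ℕ → (Fin (ν+1) → ℝ) := fun k => (‖cv k‖)⁻¹ • cv k with hu
  have hcvnorm : ∀ k, (0:ℝ) < ‖cv k‖ := fun k => norm_pos_iff.2 (hcvne k)
  have husphere : ∀ k, u k ∈ Metric.sphere (0 : Fin (ν+1) → ℝ) 1 := by
    intro k
    rw [Metric.mem_sphere, dist_zero_right, hu]
    simp only [norm_smul, norm_inv, norm_norm]
    rw [inv_mul_cancel₀ (ne_of_gt (hcvnorm k))]
  obtain ⟨vstar, hvmem, φ, hφmono, hφtend⟩ :=
    (isCompact_sphere (0 : Fin (ν+1) → ℝ) 1).tendsto_subseq husphere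
  -- extract a subsequence with constant τ
  have hfreq : ∃ τs : ℝ, (τs = 1 ∨ τs = -1) ∧ ∃ᶠ k in Filter.atTop, τ (φ k) = τs := by
    by_contra hcc
    push_neg at hcc
    have h1 := hcc 1 (Or.inl rfl)
    have h2 := hcc (-1) (Or.inr rfl)
    obtain ⟨k, hk1, hk2⟩ := (h1.and h2).exists
    rcases hτs (φ k) with hτ1 | hτ1
    · exact hk1 hτ1
    · exact hk2 hτ1
  obtain ⟨τs, hτssign, hτsfreq⟩ := hfreq
  obtain ⟨ψ, hψmono, hψτ⟩ := Filter.extraction_of_frequently_atTop hτsfreq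
  set σ : ℕ → ℕ := φ ∘ ψ with hσ
  have hσmono : StrictMono σ := hφmono.comp hψmono
  have hστ : ∀ j, τ (σ j) = τs := hψτ
  have hσtend : Filter.Tendsto (fun j => u (σ j)) Filter.atTop (nhds vstar) :=
    hφtend.comp hψmono.tendsto_atTop
  -- the limit function
  set gstar : ℝ → ℝ := gfun vstar with hgstar
  have hgV : gstar ∈ V := hgfun_mem vstar
  have hvstarne : vstar ≠ 0 := by
    intro hzero
    rw [Metric.mem_sphere, dist_zero_right, hzero] at hvmem
    simp at hvmem
  have hgne : gstar ≠ 0 := fun hcc => hvstarne (hli' vstar hcc)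
  have hgcont : Continuous gstar := by
    have : gstar = fun x => ∑ j, vstar j * bas j x := funext (hgfun_apply vstar)
    rw [this]
    exact continuous_finset_sum _ (fun j _ => continuous_const.mul (hbasc j))
  have hgper : Function.Periodic gstar (2*π) := (hVcont _ hgV).2
  -- evaluations converge
  have hFhat : ∀ k x, (∑ j, u k j * bas j x) = (‖cv k‖)⁻¹ * Ffun bas (t k) x := by
    intro k x
    rw [hcv k x, Finset.mul_sum]
    apply Finset.sum_congr rfl
    intro j _
    rw [hu]
    simp [mul_assoc]
  have hFtend : ∀ x, Filter.Tendsto (fun j => ∑ jj, u (σ j) jj * bas jj x)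
      Filter.atTop (nhds (gstar x)) := by
    intro x
    rw [hgstar, hgfun_apply]
    apply tendsto_finset_sum
    intro jj _
    exact (((continuous_apply jj).tendsto vstar).comp hσtend).mul_const _
  -- gstar vanishes at the cut points
  have hgz : ∀ i : Fin c, gstar (z i) = 0 := by
    intro i
    have hznode : ∀ k, Ffun bas (t k) (z i) = 0 := by
      intro k
      have : t k ⟨(i:ℕ), lt_of_lt_of_le i.2 hcν⟩ = z i := by
        rw [hagree k _ (by simpa using i.2)]
      rw [← this]
      exact Ffun_node (t k) _
    have : Filter.Tendsto (fun j => ∑ jj, u (σ j) jj * bas jj (z i))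
        Filter.atTop (nhds 0) := by
      have : ∀ j, (∑ jj, u (σ j) jj * bas jj (z i)) = 0 := by
        intro j
        rw [hFhat, hznode]
        ring
      rw [funext this]
      exact tendsto_const_nhds
    exact tendsto_nhds_unique (hFtend (z i)) this
  -- the sign pattern of gstar
  have hgpat : ∀ x, x ∈ Set.Ico (0:ℝ) (2*π) → (∀ i : Fin c, z i ≠ x) →
      0 ≤ τs * ((-1)^(Kcnt z x) * gstar x) := by
    intro x hx hnx
    have htend2 : Filter.Tendsto (fun j => τs * ((-1)^(Kcnt z x) *
        (∑ jj, u (σ j) jj * bas jj x))) Filter.atTop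
        (nhds (τs * ((-1)^(Kcnt z x) * gstar x))) :=
      ((hFtend x).const_mul _).const_mul _
    apply ge_of_tendsto htend2
    -- eventually the moving nodes are above x
    have hev : ∀ᶠ k in Filter.atTop, x < 2*π - (ν:ℝ) * δ k := by
      have hδ0 : Filter.Tendsto δ Filter.atTop (nhds 0) := by
        simp only [hδ]
        apply Filter.Tendsto.div_atTop (tendsto_const_nhds)
        apply Filter.Tendsto.const_mul_atTop (by positivity : (0:ℝ) < (ν:ℝ)+1)
        exact Filter.tendsto_atTop_add_const_right _ 1 tendsto_natCast_atTop_atTop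
      have htd : Filter.Tendsto (fun k => 2*π - (ν:ℝ) * δ k) Filter.atTop
          (nhds (2*π)) := by
        have h2 := Filter.Tendsto.const_sub (2*π) (hδ0.const_mul ((ν:ℝ)))
        simpa using h2
      exact htd.eventually_const_lt hx.2
    have hevσ : ∀ᶠ j in Filter.atTop, x < 2*π - (ν:ℝ) * δ (σ j) :=
      (hσmono.tendsto_atTop.eventually hev)
    apply hevσ.mono
    intro j hj
    have hhigh : ∀ i : Fin ν, c ≤ (i:ℕ) → x < t (σ j) i := by
      intro i hci
      rw [hextra _ i hci]
      have h1 : ((ν:ℝ) - (i:ℕ)) * δ (σ j) ≤ (ν:ℝ) * δ (σ j) :=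
        mul_le_mul_of_nonneg_right (hνb i) (le_of_lt (hδpos _))
      linarith
    have hKeq : Kcnt (t (σ j)) x = Kcnt z x := by
      apply Kcnt_eq_of_agree hcν (hagree (σ j)) (fun i hci => le_of_lt (hhigh i hci))
    have hxnode : ∀ i, t (σ j) i ≠ x := by
      intro i
      by_cases hic : (i:ℕ) < c
      · rw [hagree _ i hic]; exact hnx _
      · exact ne_of_gt (hhigh i (by omega))
    have hp := hτpat (σ j) x hx hxnode
    rw [hστ j, hKeq] at hp
    have := hcvnorm (σ j)
    rw [hFhat]
    nlinarith [hp, inv_pos.2 this]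
  -- pointwise nonnegativity on [0, 2π]
  set Φ : ℝ → ℝ := fun x => (s * τs) * (h x * gstar x) with hΦ
  have hΦico : ∀ x ∈ Set.Ico (0:ℝ) (2*π), 0 ≤ Φ x := by
    intro x hx
    by_cases hxz : ∃ i : Fin c, z i = x
    · obtain ⟨i, rfl⟩ := hxz
      simp only [hΦ]
      simp [hgz i]
    · push_neg at hxz
      have h1 := hpat x hx
      have h2 := hgpat x hx hxz
      have h3 := mul_nonneg h1 h2
      simp only [hΦ]
      nlinarith [neg_one_pow_sq (Kcnt z x), h3]
  have hΦnonneg : ∀ x ∈ Set.Icc (0:ℝ) (2*π), 0 ≤ Φ x := by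
    intro x hx
    rcases lt_or_eq_of_le hx.2 with hlt | heq
    · exact hΦico x ⟨hx.1, hlt⟩
    · have e1 : h x = h 0 := by
        rw [heq, show (2*π : ℝ) = 0 + 2*π from by ring, hper 0]
      have e2 : gstar x = gstar 0 := by
        rw [heq, show (2*π : ℝ) = 0 + 2*π from by ring, hgper 0]
      have := hΦico 0 ⟨le_refl _, hπ⟩
      simp only [hΦ] at this ⊢
      rw [e1, e2]
      exact this
  -- the integral of Φ is zero
  have hIntZero : (∫ x in (0:ℝ)..(2*π), Φ x) = 0 := by
    simp only [hΦ]
    rw [intervalIntegral.integral_const_mul]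
    rw [horth gstar hgV]
    ring
  -- find a point where Φ is positive
  have hτsne : τs ≠ 0 := by rcases hτssign with rfl | rfl <;> norm_num
  obtain ⟨δ₁, hδ₁pos, hball₁⟩ := Metric.eventually_nhds_iff.1
    (hh.continuousAt.eventually_ne hx₀ne)
  obtain ⟨hgfin, _⟩ := hCheb gstar hgV hgne
  have hIinf : (Set.Ioo x₀ (min (2*π) (x₀ + δ₁))).Infinite := by
    apply Set.Ioo_infinite
    rcases hx₀mem with ⟨_, hx2⟩
    exact lt_min hx2 (by linarith)
  obtain ⟨w, hw⟩ := (hIinf.diff hgfin).nonempty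
  obtain ⟨⟨hw1, hw2⟩, hw3⟩ := hw
  have hwmem : w ∈ Set.Ico (0:ℝ) (2*π) :=
    ⟨le_trans hx₀mem.1 (le_of_lt hw1), lt_of_lt_of_le hw2 (min_le_left _ _)⟩
  have hhw : h w ≠ 0 := by
    apply hball₁
    rw [Real.dist_eq, abs_lt]
    constructor
    · linarith [lt_of_lt_of_le hw2 (min_le_right _ _)]
    · linarith [lt_of_lt_of_le hw2 (min_le_right _ _)]
  have hgw : gstar w ≠ 0 := by
    intro hzero
    exact hw3 ⟨hwmem, hzero⟩
  have hΦw : 0 < Φ w := by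
    have h0 := hΦico w hwmem
    have hne0 : Φ w ≠ 0 := by
      simp only [hΦ]
      exact mul_ne_zero (mul_ne_zero hsne hτsne) (mul_ne_zero hhw hgw)
    exact lt_of_le_of_ne h0 (Ne.symm hne0)
  have hΦcont : Continuous Φ := continuous_const.mul (hh.mul hgcont)
  obtain ⟨δ₂, hδ₂pos, hball₂⟩ := Metric.eventually_nhds_iff.1
    (hΦcont.continuousAt.eventually_const_lt hΦw)
  have hw0 : 0 < w := lt_of_le_of_lt hx₀mem.1 hw1
  set δ₃ : ℝ := min (δ₂/2) (min (w/2) ((2*π - w)/2)) with hδ₃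
  have hδ₃pos : 0 < δ₃ := by
    apply lt_min (by linarith)
    apply lt_min (by linarith)
    have := hwmem.2
    linarith
  set a := w - δ₃ with ha
  set b := w + δ₃ with hb
  have hab : a < b := by rw [ha, hb]; linarith
  have ha0 : 0 ≤ a := by
    rw [ha]
    have : δ₃ ≤ w/2 := le_trans (min_le_right _ _) (min_le_left _ _)
    linarith
  have hb2π : b ≤ 2*π := by
    rw [hb]
    have : δ₃ ≤ (2*π - w)/2 := le_trans (min_le_right _ _) (min_le_right _ _)
    linarith
  have hint1 : IntervalIntegrable Φ volume 0 a := hΦcont.intervalIntegrable _ _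
  have hint2 : IntervalIntegrable Φ volume a b := hΦcont.intervalIntegrable _ _
  have hint3 : IntervalIntegrable Φ volume b (2*π) := hΦcont.intervalIntegrable _ _
  have hsplit : (∫ x in (0:ℝ)..(2*π), Φ x)
      = (∫ x in (0:ℝ)..a, Φ x) + (∫ x in a..b, Φ x) + (∫ x in b..(2*π), Φ x) := by
    rw [intervalIntegral.integral_add_adjacent_intervals hint1 hint2]
    rw [intervalIntegral.integral_add_adjacent_intervals
      (hint1.trans hint2) hint3]
  have hnn1 : 0 ≤ ∫ x in (0:ℝ)..a, Φ x := by
    apply intervalIntegral.integral_nonneg ha0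
    intro x hx
    exact hΦnonneg x ⟨hx.1, le_trans hx.2 (by linarith)⟩
  have hnn3 : 0 ≤ ∫ x in b..(2*π), Φ x := by
    apply intervalIntegral.integral_nonneg hb2π
    intro x hx
    exact hΦnonneg x ⟨le_trans (by rw [hb]; linarith) hx.1, hx.2⟩
  have hpos2 : 0 < ∫ x in a..b, Φ x := by
    apply intervalIntegral.intervalIntegral_pos_of_pos_on hint2 _ hab
    intro x hx
    apply hball₂
    rw [Real.dist_eq, abs_lt]
    rcases hx with ⟨hx1, hx2⟩
    have : δ₃ ≤ δ₂/2 := min_le_left _ _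
    constructor
    · rw [ha] at hx1; linarith
    · rw [hb] at hx2; linarith
  rw [hsplit] at hIntZero
  linarith

end
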